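/- For every x ∈ [0, 1/2], Ψ(x) ≤ 2; equivalently, the relative cost f(x) = 1 + Ψ(x) of the block cycle rotation algorithm satisfies f(x) ≤ 3. -/

import Mathlib

/-- `T(x) = x·(1 + {1/x})` for `x ≠ 0`, `T(0) = 0`. -/
noncomputable def Tmap (x : ℝ) : ℝ := if x = 0 then 0 else x * (1 + Int.fract (1 / x))

/-- `I(x) = {1/x} / (1 + {1/x})` for `x ≠ 0`, `I(0) = 0`. -/
noncomputable def Imap (x : ℝ) : ℝ :=
  if x = 0 then 0 else Int.fract (1 / x) / (1 + Int.fract (1 / x))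

/-- `Ψ(x) = 2x + 2·Σ_{j ≥ 1} T(x)·T(I(x))·⋯·T(I^{j-1}(x))·I^{j}(x)`. -/
noncomputable def Psi (x : ℝ) : ℝ :=
  2 * x + 2 * ∑' j : ℕ, (∏ i ∈ Finset.range (j + 1), Tmap (Imap^[i] x)) * Imap^[j + 1] x

lemma Tmap_nonneg {y : ℝ} (hy : 0 ≤ y) : 0 ≤ Tmap y := by
  unfold Tmap
  split
  · exact le_rfl
  · next h =>
      have hy0 : 0 < y := lt_of_le_of_ne hy (Ne.symm h)
      have hf := Int.fract_nonneg (1 / y)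
      positivity

lemma Imap_mem (y : ℝ) : Imap y ∈ Set.Icc (0 : ℝ) (1 / 2) := by
  unfold Imap
  split
  · constructor <;> norm_num
  · have hf0 := Int.fract_nonneg (1 / y)
    have hf1 := Int.fract_lt_one (1 / y)
    constructor
    · positivity
    · rw [div_le_iff₀ (by linarith)]
      linarith

lemma add_Tmap_le_one {y : ℝ} (hy : y ∈ Set.Icc (0 : ℝ) (1 / 2)) : y + Tmap y ≤ 1 := by
  obtain ⟨hy0, hy2⟩ := hy
  unfold Tmap
  split
  · next h => simp [h]
  · next h =>
    have hy0' : 0 < y := lt_of_le_of_ne hy0 (Ne.symm h)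
    have h2 : (2 : ℝ) ≤ 1 / y := by
      rw [le_div_iff₀ hy0']; linarith
    have hfloor : (2 : ℤ) ≤ ⌊(1 : ℝ) / y⌋ := by
      rw [Int.le_floor]; exact_mod_cast h2
    have hfract : (⌊(1 : ℝ) / y⌋ : ℝ) + Int.fract (1 / y) = 1 / y := Int.floor_add_fract _
    have hfloor' : (2 : ℝ) ≤ (⌊(1 : ℝ) / y⌋ : ℝ) := by exact_mod_cast hfloor
    have key : 2 + Int.fract (1 / y) ≤ 1 / y := by linarith
    have := (mul_le_mul_of_nonneg_left key hy0 : y * (2 + Int.fract (1 / y)) ≤ y * (1 / y))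
    rw [mul_one_div, div_self h] at this
    nlinarith

lemma iter_mem {x : ℝ} (hx : x ∈ Set.Icc (0 : ℝ) (1 / 2)) (i : ℕ) :
    Imap^[i] x ∈ Set.Icc (0 : ℝ) (1 / 2) := by
  induction i with
  | zero => simpa using hx
  | succ n ih => rw [Function.iterate_succ_apply']; exact Imap_mem _

lemma key_bound : ∀ N : ℕ, ∀ y ∈ Set.Icc (0 : ℝ) (1 / 2),
    2 * y + 2 * ∑ j ∈ Finset.range N,
      (∏ i ∈ Finset.range (j + 1), Tmap (Imap^[i] y)) * Imap^[j + 1] y ≤ 2 := by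
  intro N
  induction N with
  | zero => intro y hy; simp; linarith [hy.2]
  | succ N ih =>
    intro y hy
    have hz := Imap_mem y
    have hsum : ∑ j ∈ Finset.range (N + 1),
        (∏ i ∈ Finset.range (j + 1), Tmap (Imap^[i] y)) * Imap^[j + 1] y
        = Tmap y * Imap y + Tmap y * ∑ j ∈ Finset.range N,
          (∏ i ∈ Finset.range (j + 1), Tmap (Imap^[i] (Imap y))) * Imap^[j + 1] (Imap y) := by
      rw [Finset.sum_range_succ', Finset.mul_sum, add_comm]
      congr 1
      · simp
      · apply Finset.sum_congr rfl
        intro j _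
        rw [Finset.prod_range_succ']
        simp only [Function.iterate_succ_apply, Function.iterate_zero_apply]
        ring
    rw [hsum]
    have hih := ih (Imap y) hz
    have hT := Tmap_nonneg hy.1
    have hTy := add_Tmap_le_one hy
    nlinarith [mul_le_mul_of_nonneg_left hih hT]

theorem stmt_9 : ∀ x ∈ Set.Icc (0 : ℝ) (1 / 2), Psi x ≤ 2 ∧ 1 + Psi x ≤ 3 := by
  intro x hx
  have hnonneg : ∀ j : ℕ,
      0 ≤ (∏ i ∈ Finset.range (j + 1), Tmap (Imap^[i] x)) * Imap^[j + 1] x := by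
    intro j
    apply mul_nonneg
    · exact Finset.prod_nonneg fun i _ => Tmap_nonneg (iter_mem hx i).1
    · exact (iter_mem hx (j + 1)).1
  have htsum : (∑' j : ℕ, (∏ i ∈ Finset.range (j + 1), Tmap (Imap^[i] x)) * Imap^[j + 1] x)
      ≤ 1 - x := by
    apply Real.tsum_le_of_sum_range_le hnonneg
    intro n
    have := key_bound n x hx
    linarith
  have : Psi x ≤ 2 := by
    unfold Psi
    linarith
  exact ⟨this, by linarith⟩
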